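/- Let V = ⊕_{i∈I} V_i be the Hilbert direct sum of complex Hilbert spaces over a countable index set I. Let a_{ij} : V_j × V_i → ℂ be sesquilinear mappings that are continuous with constants M_{ij} ≥ 0 (|a_{ij}(ψ,ψ')| ≤ M_{ij}‖ψ‖_{V_j}‖ψ'‖_{V_i}), such that the form a(ψ,ψ') := ∑_{i,j∈I} a_{ij}(ψ_j,ψ'_i) is a well-defined continuous sesquilinear form on V. Assume each diagonal form a_{ii} is coercive with constant α_{ii} > 0, i.e. Re a_{ii}(ψ,ψ) ≥ α_{ii}‖ψ‖²_{V_i}. Define the matrix A by A_{ii} = α_{ii} and A_{ij} = −M_{ij} for i ≠ j. If A defines a bounded operator on ℓ²(I) which is coercive with constant α > 0 (i.e. Re (Av|v) ≥ α‖v‖²_{ℓ²(I)} for all v ∈ ℓ²(I)), then the form a is coercive on V with the same constant α. -/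

import Mathlib

/-- Let `lp V 2` be the Hilbert direct sum of complex Hilbert spaces over
a countable index set `I`.  Let `a i j : V j × V i → ℂ` be sesquilinear mappings, continuous
with constants `M i j ≥ 0`, such that the form `ψ,ψ' ↦ ∑_{i,j} a i j (ψ j) (ψ' i)` is a
well-defined continuous sesquilinear form on `lp V 2`.  Assume each diagonal form `a i i` is
coercive with constant `α i > 0`.  If the matrix `A` with `A i i = α i` and
`A i j = -(M i j)` for `i ≠ j` defines a bounded operator `T` on real `ℓ²(I)` which is
coercive with constant `c > 0`, then the form is coercive with the same constant `c`. -/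
theorem stmt4 {I : Type*} [Countable I]
    {V : I → Type*} [∀ i, NormedAddCommGroup (V i)] [∀ i, InnerProductSpace ℂ (V i)]
    [∀ i, CompleteSpace (V i)]
    (a : ∀ i j, V j →ₗ[ℂ] V i →ₗ⋆[ℂ] ℂ)
    (M : I → I → ℝ) (hMnonneg : ∀ i j, 0 ≤ M i j)
    (hbound : ∀ i j (x : V j) (y : V i), ‖a i j x y‖ ≤ M i j * ‖x‖ * ‖y‖)
    (hsum : ∀ ψ ψ' : lp V 2,
      Summable (fun p : I × I => a p.1 p.2 (ψ p.2) (ψ' p.1)))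
    (hcont : ∃ C : ℝ, ∀ ψ ψ' : lp V 2,
      ‖∑' p : I × I, a p.1 p.2 (ψ p.2) (ψ' p.1)‖ ≤ C * ‖ψ‖ * ‖ψ'‖)
    (α : I → ℝ) (hαpos : ∀ i, 0 < α i)
    (hdiag : ∀ i (x : V i), α i * ‖x‖ ^ 2 ≤ (a i i x x).re)
    (A : I → I → ℝ) (hAdiag : ∀ i, A i i = α i)
    (hAoff : ∀ i j, i ≠ j → A i j = -(M i j))
    (T : lp (fun _ : I => ℝ) 2 →L[ℝ] lp (fun _ : I => ℝ) 2)
    (hT : ∀ (x : lp (fun _ : I => ℝ) 2) (i : I), HasSum (fun j => A i j * x j) (T x i))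
    (c : ℝ) (hc : 0 < c)
    (hTcoer : ∀ x : lp (fun _ : I => ℝ) 2, c * ‖x‖ ^ 2 ≤ (inner ℝ (T x) x : ℝ)) :
    ∀ ψ : lp V 2,
      c * ‖ψ‖ ^ 2 ≤ (∑' p : I × I, a p.1 p.2 (ψ p.2) (ψ p.1)).re := by
  classical
  intro ψ
  have h2 : (0:ℝ) < (2 : ENNReal).toReal := by norm_num
  -- the element x of real ℓ² with entries ‖ψ i‖
  have hmem : Memℓp (fun i => ‖ψ i‖) (2 : ENNReal) := by
    apply memℓp_gen
    have := (lp.memℓp ψ).summable h2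
    simpa [Real.norm_eq_abs, abs_of_nonneg (norm_nonneg _)] using this
  set x : lp (fun _ : I => ℝ) 2 := ⟨fun i => ‖ψ i‖, hmem⟩ with hxdef
  have hxval : ∀ i, x i = ‖ψ i‖ := fun i => rfl
  have hxnn : ∀ i, 0 ≤ x i := fun i => norm_nonneg _
  -- norms agree
  have hnorm : ‖x‖ = ‖ψ‖ := by
    rw [lp.norm_eq_tsum_rpow h2 x, lp.norm_eq_tsum_rpow h2 ψ]
    congr 1
    refine tsum_congr fun i => ?_
    rw [hxval]
    simp [Real.norm_eq_abs, abs_of_nonneg (norm_nonneg _)]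
  -- summability of the diagonal real parts
  have hdiagsum : Summable (fun i => (a i i (ψ i) (ψ i)).re) := by
    have h1 := (hsum ψ ψ).comp_injective
      (i := fun i : I => ((i, i) : I × I)) (fun i j h => (Prod.ext_iff.1 h).1)
    have := h1.map Complex.reCLM Complex.reCLM.continuous
    simpa [Function.comp_def, Complex.reCLM_apply] using this
  have hαx : Summable (fun i => α i * x i ^ 2) := by
    refine hdiagsum.of_nonneg_of_le (fun i => ?_) (fun i => ?_)
    · exact mul_nonneg (hαpos i).le (sq_nonneg _)
    · rw [hxval]; exact hdiag i (ψ i)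
  -- row-wise absolute sums
  have hrow : ∀ i, HasSum (fun j => |A i j * x j|) (2 * (α i * x i) - T x i) := by
    intro i
    have hf := hT x i
    have hone : HasSum (fun j => if j = i then 2 * (α i * x i) else 0)
        (2 * (α i * x i)) := hasSum_ite_eq i _
    have := hf.neg.add hone
    have heq : (fun j => -(A i j * x j) + if j = i then 2 * (α i * x i) else 0)
        = fun j => |A i j * x j| := by
      funext j
      by_cases hji : j = i
      · subst hji
        rw [hAdiag j, if_pos rfl, abs_of_nonneg (mul_nonneg (hαpos j).le (hxnn j))]
        ring
      · rw [hAoff i j (Ne.symm hji), if_neg hji,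
          abs_of_nonpos (by simpa using mul_nonneg (hMnonneg i j) (hxnn j))]
        ring
    rw [heq] at this
    simpa [sub_eq_neg_add] using this
  -- summability of the elliptic series and of T x • x
  have hTx : Summable (fun i => T x i * x i) := by
    have := lp.summable_inner (𝕜 := ℝ) (T x) x
    simpa [RCLike.inner_apply, mul_comm] using this
  -- the matrix form
  set F : I × I → ℝ := fun p => A p.1 p.2 * x p.2 * x p.1 with hFdef
  have hFabs : Summable (fun p : I × I => |F p|) := by
    rw [summable_prod_of_nonneg (fun p => abs_nonneg _)]
    constructor
    · intro i
      have := ((hrow i).mul_right (x i)).summable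
      refine this.congr fun j => ?_
      rw [hFdef]
      simp [abs_mul, abs_of_nonneg (hxnn i)]
    · have hx2 : Summable (fun i => 2 * (α i * x i ^ 2) - T x i * x i) :=
        (hαx.mul_left 2).sub hTx
      refine hx2.congr fun i => ?_
      have := ((hrow i).mul_right (x i)).tsum_eq
      have heq : (∑' j, |F (i, j)|) = ∑' j, |A i j * x j| * x i := by
        refine tsum_congr fun j => ?_
        rw [hFdef]
        simp [abs_mul, abs_of_nonneg (hxnn i)]
      rw [heq, this]
      ring
  have hFsum : Summable F := hFabs.of_abs
  -- tsum F equals the inner product ⟪T x, x⟫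
  have htsumF : (∑' p, F p) = (inner ℝ (T x) x : ℝ) := by
    rw [Summable.tsum_prod' hFsum (fun i => ((hT x i).mul_right (x i)).summable), lp.inner_eq_tsum]
    refine tsum_congr fun i => ?_
    have := ((hT x i).mul_right (x i)).tsum_eq
    simp only [hFdef]
    rw [this, RCLike.inner_apply]
    simp [mul_comm]
  -- the real parts of the form are summable
  have hResum : Summable (fun p : I × I => (a p.1 p.2 (ψ p.2) (ψ p.1)).re) := by
    have := (hsum ψ ψ).map Complex.reCLM Complex.reCLM.continuous
    simpa [Function.comp_def, Complex.reCLM_apply] using this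
  -- pointwise comparison
  have hpt : ∀ p : I × I, F p ≤ (a p.1 p.2 (ψ p.2) (ψ p.1)).re := by
    rintro ⟨i, j⟩
    by_cases hij : i = j
    · subst hij
      rw [hFdef]
      simp only [hAdiag i]
      calc α i * x i * x i = α i * ‖ψ i‖ ^ 2 := by rw [hxval]; ring
        _ ≤ _ := hdiag i (ψ i)
    · rw [hFdef]
      simp only [hAoff i j hij]
      have h1 : -(‖a i j (ψ j) (ψ i)‖) ≤ (a i j (ψ j) (ψ i)).re := by
        have := Complex.abs_re_le_norm (a i j (ψ j) (ψ i))
        have h2 := neg_abs_le (a i j (ψ j) (ψ i)).re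
        calc -(‖a i j (ψ j) (ψ i)‖) ≤ -|(a i j (ψ j) (ψ i)).re| := by
              simp only [neg_le_neg_iff]; exact this
          _ ≤ _ := h2
      calc -(M i j) * x j * x i = -(M i j * ‖ψ j‖ * ‖ψ i‖) := by
            rw [hxval, hxval]; ring
        _ ≤ -(‖a i j (ψ j) (ψ i)‖) := by
            simp only [neg_le_neg_iff]; exact hbound i j (ψ j) (ψ i)
        _ ≤ _ := h1
  -- put it all together
  have hre : (∑' p : I × I, a p.1 p.2 (ψ p.2) (ψ p.1)).re
      = ∑' p : I × I, (a p.1 p.2 (ψ p.2) (ψ p.1)).re :=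
    Complex.re_tsum (hsum ψ ψ)
  rw [hre]
  calc c * ‖ψ‖ ^ 2 = c * ‖x‖ ^ 2 := by rw [hnorm]
    _ ≤ (inner ℝ (T x) x : ℝ) := hTcoer x
    _ = ∑' p, F p := htsumF.symm
    _ ≤ _ := Summable.tsum_le_tsum hpt hFsum hResum
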